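/- Let n and ℓ be positive integers with n ≥ 2ℓ+2. If F is an acyclic n-vertex simple graph, H is an n-vertex simple graph containing a cycle, and F and H have the same (n−ℓ)-deck, then no card of F has radius at most 1; in particular no card is a star, and the minimum radius k̂ among cards satisfies k̂ > 1. -/

import Mathlib

open SimpleGraph

/-- The eccentricity (`ℕ∞`-valued) of a vertex: supremum of extended distances to
all vertices.  It is infinite if the graph is disconnected. -/
noncomputable def eccent {V : Type*} (G : SimpleGraph V) (v : V) : ℕ∞ :=
  ⨆ w, G.edist v w

/-- The radius (`ℕ∞`-valued) of a graph: minimum eccentricity. -/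
noncomputable def gradius {V : Type*} (G : SimpleGraph V) : ℕ∞ :=
  ⨅ v, _root_.eccent G v

/-- The diameter (`ℕ∞`-valued) of a graph: maximum distance between two vertices. -/
noncomputable def gdiam {V : Type*} (G : SimpleGraph V) : ℕ∞ :=
  ⨆ v, ⨆ w, G.edist v w

/-- Two graphs on `Fin n` have the same `k`-deck: there is a bijection `φ` between the
`k`-element vertex subsets such that for each subset `s` the subgraph induced by `s` in the
first graph is isomorphic to the subgraph induced by `φ s` in the second. -/
def SameDeck {n : ℕ} (G H : SimpleGraph (Fin n)) (k : ℕ) : Prop :=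
  ∃ φ : {s : Finset (Fin n) // s.card = k} ≃ {s : Finset (Fin n) // s.card = k},
    ∀ s : {s : Finset (Fin n) // s.card = k},
      Nonempty ((SimpleGraph.induce (↑s.1 : Set (Fin n)) G) ≃g
                (SimpleGraph.induce (↑(φ s).1 : Set (Fin n)) H))

/-- A star: one vertex (the hub) adjacent to all other vertices, and no other edges. -/
def IsStar {V : Type*} (A : SimpleGraph V) : Prop :=
  ∃ c : V, (∀ v : V, v ≠ c → A.Adj c v) ∧ ∀ u v : V, A.Adj u v → u = c ∨ v = c

/-! ### Auxiliary material -/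

section Aux

open Finset

/-- Edge count of a graph, `ℕ`-valued via `Set.ncard`. -/
noncomputable def ecard {W : Type*} (A : SimpleGraph W) : ℕ := A.edgeSet.ncard

lemma ecard_eq_card_edgeFinset {W : Type*} (A : SimpleGraph W) [Fintype A.edgeSet] :
    ecard A = A.edgeFinset.card := Set.ncard_eq_toFinset_card' _

lemma ecard_eq_of_iso {W X : Type*} {A : SimpleGraph W} {B : SimpleGraph X}
    [Fintype W] [Fintype X] (e : A ≃g B) : ecard A = ecard B := by
  classical
  rw [ecard_eq_card_edgeFinset, ecard_eq_card_edgeFinset]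
  exact e.card_edgeFinset_eq

lemma exists_walk_induce {W : Type*} {G : SimpleGraph W} {s : Set W} {u v : W} (p : G.Walk u v)
    (h : ∀ x ∈ p.support, x ∈ s) (hu : u ∈ s) (hv : v ∈ s) :
    ∃ q : (G.induce s).Walk ⟨u, hu⟩ ⟨v, hv⟩,
      q.map (SimpleGraph.Embedding.induce s).toHom = p := by
  induction p with
  | nil => exact ⟨Walk.nil, rfl⟩
  | @cons a b c hab p ih =>
      have hb : b ∈ s := h b (by simp)
      obtain ⟨q, hq⟩ := ih (fun x hx => h x (by simp [hx])) hb hv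
      refine ⟨Walk.cons (by simpa using hab) q, ?_⟩
      simp [Walk.map_cons, hq]

lemma isAcyclic_induce {W : Type*} {G : SimpleGraph W} (hG : G.IsAcyclic) (s : Set W) :
    (G.induce s).IsAcyclic := by
  intro v c hc
  exact hG ((c.map (SimpleGraph.Embedding.induce s).toHom)) (hc.map Subtype.val_injective)

lemma isAcyclic_of_iso {W X : Type*} {G : SimpleGraph W} {G' : SimpleGraph X} (e : G ≃g G')
    (hG : G.IsAcyclic) : G'.IsAcyclic := by
  intro v c hc
  exact hG (c.map e.symm.toHom) (hc.map e.symm.injective)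

lemma exists_dominating_of_gradius_le_one {W : Type*} {G : SimpleGraph W}
    (h : gradius G ≤ 1) : ∃ c : W, ∀ w : W, w ≠ c → G.Adj c w := by
  have hc : ∃ c : W, _root_.eccent G c ≤ 1 := by
    by_contra hno
    push_neg at hno
    have h2 : (2 : ℕ∞) ≤ gradius G := by
      refine le_iInf fun c => ?_
      have := hno c
      have : (1 : ℕ∞) < _root_.eccent G c :=
        lt_of_not_ge (by exact fun hle => absurd hle (by simpa using this.not_ge))
      exact Order.add_one_le_of_lt this
    have : (2 : ℕ∞) ≤ 1 := h2.trans h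
    norm_num at this
  obtain ⟨c, hc⟩ := hc
  refine ⟨c, fun w hw => ?_⟩
  have hle : G.edist c w ≤ 1 := le_trans (le_iSup _ w) hc
  have hne : G.edist c w ≠ 0 := by
    simpa [SimpleGraph.edist_eq_zero_iff] using fun h => hw h.symm
  have : G.edist c w = 1 := le_antisymm hle (Order.one_le_iff_pos.mpr (pos_iff_ne_zero.mpr hne))
  exact SimpleGraph.edist_eq_one_iff_adj.mp this

lemma isStar_of_acyclic_dominating {W : Type*} {G : SimpleGraph W} (hG : G.IsAcyclic) (c : W)
    (hc : ∀ w : W, w ≠ c → G.Adj c w) : IsStar G := by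
  refine ⟨c, hc, fun u v huv => ?_⟩
  by_contra hcon
  push_neg at hcon
  obtain ⟨hu, hv⟩ := hcon
  have hcv : G.Adj c v := hc v hv
  have hcu : G.Adj c u := hc u hu
  have hune : u ≠ v := huv.ne
  let p1 : G.Path c v := ⟨Walk.cons hcv Walk.nil, by simp [hcv.ne]⟩
  let p2 : G.Path c v := ⟨Walk.cons hcu (Walk.cons huv Walk.nil), by
    simp [hcu.ne, hune]; exact fun h => hv h.symm⟩
  have := hG.path_unique p1 p2
  have hlen : (p1 : G.Walk c v).length = (p2 : G.Walk c v).length := by rw [this]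
  simp [p1, p2] at hlen

lemma isStar_of_iso {W X : Type*} {G : SimpleGraph W} {G' : SimpleGraph X} (e : G ≃g G')
    (h : IsStar G) : IsStar G' := by
  obtain ⟨c, h1, h2⟩ := h
  refine ⟨e c, fun v hv => ?_, fun u v huv => ?_⟩
  · have : G.Adj c (e.symm v) := h1 (e.symm v) (by
      intro hh; apply hv; rw [← e.apply_symm_apply v, hh])
    have := e.map_adj_iff.mpr this
    simpa using this
  · have : G.Adj (e.symm u) (e.symm v) := by
      have := e.symm.map_adj_iff.mpr huv
      simpa using this
    rcases h2 _ _ this with h | h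
    · left; rw [← e.apply_symm_apply u, h]
    · right; rw [← e.apply_symm_apply v, h]

variable {V : Type*} [Fintype V] [DecidableEq V]

lemma induce_card_edgeFinset (G : SimpleGraph V) [Fintype G.edgeSet] (s : Finset V)
    [Fintype (G.induce (↑s : Set V)).edgeSet] [DecidablePred (fun e : Sym2 V => ∀ x ∈ e, x ∈ s)] :
    (G.induce (↑s : Set V)).edgeFinset.card
      = (G.edgeFinset.filter (fun e => ∀ x ∈ e, x ∈ s)).card := by
  classical
  refine Finset.card_bij (fun e _ => Sym2.map Subtype.val e) ?_ ?_ ?_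
  · intro e he
    induction e with
    | _ a b =>
      simp only [mem_edgeFinset, mem_edgeSet] at he
      simp only [Sym2.map_pair_eq, Finset.mem_filter, mem_edgeFinset, mem_edgeSet]
      refine ⟨he, ?_⟩
      intro x hx
      rcases Sym2.mem_iff.mp hx with h | h
      · subst h; exact a.2
      · subst h; exact b.2
  · intro e1 _ e2 _ h
    exact Sym2.map.injective Subtype.val_injective h
  · intro e he
    simp only [Finset.mem_filter, mem_edgeFinset, mem_edgeSet] at he
    obtain ⟨hadj, hmem⟩ := he
    induction e with
    | _ a b =>
      have ha : a ∈ s := hmem a (by simp)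
      have hb : b ∈ s := hmem b (by simp)
      refine ⟨s(⟨a, ha⟩, ⟨b, hb⟩), ?_, by simp⟩
      simp only [mem_edgeFinset, mem_edgeSet]
      exact hadj

lemma card_supersets (a b : V) (hab : a ≠ b) (k : ℕ) (hk : 2 ≤ k) :
    ((Finset.univ.powersetCard k).filter (fun s : Finset V => a ∈ s ∧ b ∈ s)).card
      = (Fintype.card V - 2).choose (k - 2) := by
  classical
  have hcard : (((Finset.univ : Finset V).erase a).erase b).card = Fintype.card V - 2 := by
    rw [Finset.card_erase_of_mem (by simp [hab.symm]), Finset.card_erase_of_mem (by simp)]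
    simp [Finset.card_univ]
    omega
  rw [← hcard, ← Finset.card_powersetCard]
  refine Finset.card_bij' (fun s _ => (s.erase a).erase b)
    (fun t _ => insert a (insert b t)) ?_ ?_ ?_ ?_
  · intro s hs
    simp only [Finset.mem_filter, Finset.mem_powersetCard] at hs
    obtain ⟨⟨_, hcardk⟩, ha, hb⟩ := hs
    simp only [Finset.mem_powersetCard]
    constructor
    · intro x hx
      simp only [Finset.mem_erase] at hx ⊢
      exact ⟨hx.1, hx.2.1, by simp⟩
    · rw [Finset.card_erase_of_mem (by simp [Finset.mem_erase, hab.symm, hb]),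
        Finset.card_erase_of_mem ha, hcardk]
      omega
  · intro t ht
    simp only [Finset.mem_powersetCard] at ht
    obtain ⟨hsub, hcardt⟩ := ht
    have hat : a ∉ t := fun h => by simpa using (Finset.mem_erase.mp (hsub h)).2
    have hbt : b ∉ t := fun h => by simpa using (Finset.mem_erase.mp (hsub h)).1
    simp only [Finset.mem_filter, Finset.mem_powersetCard]
    refine ⟨⟨Finset.subset_univ _, ?_⟩, by simp, by simp [hab.symm]⟩
    rw [Finset.card_insert_of_notMem (by simp [hat, hab]),
      Finset.card_insert_of_notMem hbt, hcardt]
    omega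
  · intro s hs
    simp only [Finset.mem_filter] at hs
    obtain ⟨_, ha, hb⟩ := hs
    have hb' : b ∈ s.erase a := Finset.mem_erase.mpr ⟨hab.symm, hb⟩
    rw [Finset.insert_erase hb', Finset.insert_erase ha]
  · intro t ht
    simp only [Finset.mem_powersetCard] at ht
    have hat : a ∉ t := fun h => by simpa using (Finset.mem_erase.mp (ht.1 h)).2
    have hbt : b ∉ t := fun h => by simpa using (Finset.mem_erase.mp (ht.1 h)).1
    have h1 : a ∉ insert b t := by simp [hab, hat]
    rw [Finset.erase_insert h1, Finset.erase_insert hbt]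

lemma sum_ecard_induce (G : SimpleGraph V) (k : ℕ) (hk : 2 ≤ k) :
    ∑ s ∈ (Finset.univ : Finset V).powersetCard k,
        ecard (G.induce ((s : Finset V) : Set V))
      = ecard G * (Fintype.card V - 2).choose (k - 2) := by
  classical
  simp only [ecard_eq_card_edgeFinset]
  have step1 : ∀ s ∈ Finset.univ.powersetCard k,
      (G.induce (↑s : Set V)).edgeFinset.card
        = (G.edgeFinset.filter (fun e => ∀ x ∈ e, x ∈ s)).card :=
    fun s _ => induce_card_edgeFinset G s
  rw [Finset.sum_congr rfl step1]
  have step2 : ∑ s ∈ Finset.univ.powersetCard k,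
      (G.edgeFinset.filter (fun e => ∀ x ∈ e, x ∈ s)).card
      = ∑ e ∈ G.edgeFinset, ((Finset.univ.powersetCard k).filter
          (fun s : Finset V => ∀ x ∈ e, x ∈ s)).card := by
    simp only [Finset.card_filter]
    exact Finset.sum_comm
  rw [step2]
  rw [Finset.sum_congr rfl (fun e he => ?_), Finset.sum_const, smul_eq_mul]
  induction e with
  | _ a b =>
    simp only [mem_edgeFinset, mem_edgeSet] at he
    have hab : a ≠ b := G.ne_of_adj he
    have : ((Finset.univ.powersetCard k).filter (fun s : Finset V => ∀ x ∈ s(a,b), x ∈ s))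
        = ((Finset.univ.powersetCard k).filter (fun s : Finset V => a ∈ s ∧ b ∈ s)) := by
      refine Finset.filter_congr fun s _ => ?_
      constructor
      · intro h; exact ⟨h a (by simp), h b (by simp)⟩
      · rintro ⟨h1, h2⟩ x hx
        rcases Sym2.mem_iff.mp hx with h | h <;> subst h <;> assumption
    rw [this, card_supersets a b hab k hk]

lemma concat_isPath {G : SimpleGraph V} {u v w : V} {p : G.Walk u v} (hp : p.IsPath)
    (h : G.Adj v w) (hw : w ∉ p.support) : (p.concat h).IsPath := by
  rw [← Walk.isPath_reverse_iff, Walk.reverse_concat]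
  rw [Walk.cons_isPath_iff, Walk.isPath_reverse_iff, Walk.support_reverse]
  exact ⟨hp, by simpa using hw⟩

lemma ecard_lt_card_of_isAcyclic [Nonempty V] {G : SimpleGraph V} (hG : G.IsAcyclic) :
    ecard G < Fintype.card V := by
  classical
  rw [ecard_eq_card_edgeFinset]
  set root : V → V := fun v => (G.connectedComponentMk v).out with hrootdef
  have hmkroot : ∀ v, G.connectedComponentMk (root v) = G.connectedComponentMk v :=
    fun v => Quot.out_eq _
  have hreach : ∀ v, G.Reachable (root v) v := fun v => ConnectedComponent.exact (hmkroot v)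
  have hrooteq : ∀ {u v : V}, G.Reachable u v → root u = root v := by
    intro u v h
    simp only [hrootdef]
    rw [ConnectedComponent.sound h]
  have hrr : ∀ v, root (root v) = root v := fun v => hrooteq (hreach v)
  set P : ∀ v : V, G.Path (root v) v := fun v => (hreach v).some.toPath with hPdef
  set Child : V → V → Prop := fun u v => u ∈ (P v).1.support with hChilddef
  have hdecomp : ∀ {u v : V} (h : G.Adj u v) (hu : Child u v),
      (P v).1 = ((P v).1.takeUntil u hu).concat h := by
    intro u v h hu
    have hdrop := (P v).2.dropUntil hu
    have huniq := hG.path_unique ⟨(P v).1.dropUntil u hu, hdrop⟩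
      ⟨Walk.cons h Walk.nil, by simp [h.ne]⟩
    have : (P v).1.dropUntil u hu = Walk.cons h Walk.nil := congrArg Subtype.val huniq
    rw [Walk.concat_eq_append, ← this, Walk.take_spec]
  have hparent : ∀ {u₁ u₂ v : V}, G.Adj u₁ v → G.Adj u₂ v → Child u₁ v → Child u₂ v →
      u₁ = u₂ := by
    intro u₁ u₂ v h₁ h₂ hc₁ hc₂
    have e₁ := hdecomp h₁ hc₁
    have e₂ := hdecomp h₂ hc₂
    have : (((P v).1.takeUntil u₁ hc₁).concat h₁).reverse
        = (((P v).1.takeUntil u₂ hc₂).concat h₂).reverse := by rw [← e₁, ← e₂]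
    rw [Walk.reverse_concat, Walk.reverse_concat] at this
    have hs := congrArg Walk.support this
    rw [Walk.support_cons, Walk.support_cons] at hs
    have hs' := List.tail_eq_of_cons_eq hs
    rw [((P v).1.takeUntil u₁ hc₁).reverse.support_eq_cons,
      ((P v).1.takeUntil u₂ hc₂).reverse.support_eq_cons] at hs'
    exact List.head_eq_of_cons_eq hs'
  have hchild_exists : ∀ {a b : V}, G.Adj a b → Child a b ∨ Child b a := by
    intro a b h
    by_cases hmem : a ∈ (P b).1.support
    · exact Or.inl hmem
    · right
      have hr : root b = root a := hrooteq h.reachable |>.symm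
      have hpath : ((((P b).1.copy hr rfl)).concat h.symm).IsPath := by
        refine concat_isPath ?_ h.symm ?_
        · rw [Walk.isPath_copy]; exact (P b).2
        · rw [Walk.support_copy]; exact hmem
      have huniq := hG.path_unique (P a) ⟨((P b).1.copy hr rfl).concat h.symm, hpath⟩
      have : (P a).1 = ((P b).1.copy hr rfl).concat h.symm := congrArg Subtype.val huniq
      show b ∈ ((P a) : G.Walk (root a) a).support
      rw [this, Walk.support_concat, Walk.support_copy]
      simp [Walk.end_mem_support]
  set f : Sym2 V → V := fun e =>
    if h : ∃ p : V × V, e = s(p.1, p.2) ∧ Child p.1 p.2 then h.choose.2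
      else Classical.arbitrary V with hfdef
  have hf : ∀ e ∈ G.edgeFinset, ∃ u : V, e = s(u, f e) ∧ Child u (f e) ∧ G.Adj u (f e) := by
    intro e he
    rw [mem_edgeFinset] at he
    induction e with
    | _ a b =>
      have hadj : G.Adj a b := he
      have hex : ∃ p : V × V, s(a,b) = s(p.1, p.2) ∧ Child p.1 p.2 := by
        rcases hchild_exists hadj with hc | hc
        · exact ⟨(a, b), rfl, hc⟩
        · exact ⟨(b, a), Sym2.eq_swap, hc⟩
      have hfeq : f s(a, b) = hex.choose.2 := by
        simp only [hfdef]
        exact dif_pos hex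
      rw [hfeq]
      refine ⟨hex.choose.1, hex.choose_spec.1, hex.choose_spec.2, ?_⟩
      exact G.mem_edgeSet.mp (hex.choose_spec.1 ▸ he)
  have hfne : ∀ e ∈ G.edgeFinset, f e ≠ root (f e) := by
    intro e he habs
    obtain ⟨u, -, hc, hadj⟩ := hf e he
    set v := f e
    have : (P v).1.support = [v] := by
      have hloop : ((P v).1.copy habs.symm rfl) = (Walk.nil : G.Walk v v) := by
        have : (⟨(P v).1.copy habs.symm rfl, by rw [Walk.isPath_copy]; exact (P v).2⟩ :
            G.Path v v) = Path.nil := Path.loop_eq _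
        exact congrArg Subtype.val this
      have := congrArg Walk.support hloop
      rw [Walk.support_copy] at this
      simpa using this
    rw [hChilddef] at hc
    rw [this] at hc
    simp at hc
    exact hadj.ne (by rw [hc])
  have hinj : Set.InjOn f G.edgeFinset := by
    intro e₁ he₁ e₂ he₂ hfeq
    obtain ⟨u₁, heq₁, hc₁, hadj₁⟩ := hf e₁ he₁
    obtain ⟨u₂, heq₂, hc₂, hadj₂⟩ := hf e₂ he₂
    rw [← hfeq] at heq₂ hc₂ hadj₂
    have := hparent hadj₁ hadj₂ hc₁ hc₂
    rw [heq₁, heq₂, this]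
  have hsub : G.edgeFinset.image f ⊆ Finset.univ.erase (root (Classical.arbitrary V)) := by
    intro v hv
    obtain ⟨e, he, hfe⟩ := Finset.mem_image.mp hv
    refine Finset.mem_erase.mpr ⟨?_, Finset.mem_univ _⟩
    intro habs
    apply hfne e he
    rw [hfe, habs, hrr]
  calc G.edgeFinset.card = (G.edgeFinset.image f).card :=
        (Finset.card_image_of_injOn hinj).symm
    _ ≤ (Finset.univ.erase (root (Classical.arbitrary V))).card := Finset.card_le_card hsub
    _ < Fintype.card V := by
        rw [Finset.card_erase_of_mem (Finset.mem_univ _), Finset.card_univ]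
        have : 0 < Fintype.card V := Fintype.card_pos
        omega

lemma star_cycle_ecard_lower (H : SimpleGraph V) {v c : V} {p : H.Walk v v}
    (hp : p.IsCycle) (L : Finset V) (hadj : ∀ x ∈ L, H.Adj c x) :
    L.card + (p.length - 2) ≤ ecard H := by
  classical
  have hE : ∃ E : List (Sym2 V), E.Nodup ∧ p.length - 2 ≤ E.length ∧
      ∀ e ∈ E, e ∈ H.edgeSet ∧ c ∉ e := by
    by_cases hc : c ∈ p.support
    · have hp' := hp.rotate hc
      have hlenrot : (p.rotate c hc).length = p.length := by
        have := (p.rotate_edges c hc).perm.length_eq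
        simpa [Walk.length_edges] using this
      cases hrot : p.rotate c hc with
      | nil => rw [hrot] at hp'; exact absurd rfl hp'.ne_nil
      | @cons _ w _ h q =>
        rw [hrot] at hp' hlenrot
        have hq : q.IsPath := ((Walk.cons_isCycle_iff q h).mp hp').1
        have hqrev : q.reverse.IsPath := hq.reverse
        have hne : c ≠ w := h.ne
        cases hrev : q.reverse with
        | nil => exact absurd (Walk.Nil.eq (hrev ▸ Walk.Nil.nil)) hne
        | @cons _ x _ h' r =>
          rw [hrev] at hqrev
          have hr : r.IsPath := ((Walk.cons_isPath_iff h' r).mp hqrev).1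
          have hcr : c ∉ r.support := ((Walk.cons_isPath_iff h' r).mp hqrev).2
          refine ⟨r.edges, hr.isTrail.edges_nodup, ?_, ?_⟩
          · have h1 : r.length + 1 = q.reverse.length := by rw [hrev]; simp
            rw [Walk.length_reverse] at h1
            have h2 : q.length + 1 = p.length := by
              rw [← hlenrot]; simp
            rw [Walk.length_edges]
            omega
          · intro e he
            refine ⟨r.edges_subset_edgeSet he, ?_⟩
            intro hce
            induction e with
            | _ a b =>
              rcases Sym2.mem_iff.mp hce with rfl | rfl
              · exact hcr (r.fst_mem_support_of_mem_edges he)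
              · exact hcr (r.snd_mem_support_of_mem_edges he)
    · refine ⟨p.edges, hp.isTrail.edges_nodup, by rw [Walk.length_edges]; omega, ?_⟩
      intro e he
      refine ⟨p.edges_subset_edgeSet he, ?_⟩
      intro hce
      induction e with
      | _ a b =>
        rcases Sym2.mem_iff.mp hce with rfl | rfl
        · exact hc (p.fst_mem_support_of_mem_edges he)
        · exact hc (p.snd_mem_support_of_mem_edges he)
  obtain ⟨E, hnodup, hlen, hEprop⟩ := hE
  set A : Finset (Sym2 V) := L.image (fun x => s(c, x)) with hA
  have hcardA : A.card = L.card := by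
    rw [hA]
    refine Finset.card_image_of_injOn ?_
    intro x _ y _ hxy
    exact Sym2.congr_right.mp hxy
  have hsubA : A ⊆ H.edgeFinset := by
    intro e he
    obtain ⟨x, hx, rfl⟩ := Finset.mem_image.mp he
    rw [mem_edgeFinset, mem_edgeSet]
    exact hadj x hx
  have hsubB : E.toFinset ⊆ H.edgeFinset := by
    intro e he
    rw [List.mem_toFinset] at he
    rw [mem_edgeFinset]
    exact (hEprop e he).1
  have hcardB : E.toFinset.card = E.length := List.toFinset_card_of_nodup hnodup
  have hdisj : Disjoint A E.toFinset := by
    rw [Finset.disjoint_left]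
    intro e heA heB
    obtain ⟨x, hx, rfl⟩ := Finset.mem_image.mp heA
    exact (hEprop _ (List.mem_toFinset.mp heB)).2 (by simp)
  have hunion : A ∪ E.toFinset ⊆ H.edgeFinset := Finset.union_subset hsubA hsubB
  have := Finset.card_le_card hunion
  rw [Finset.card_union_of_disjoint hdisj, hcardA, hcardB] at this
  rw [ecard_eq_card_edgeFinset]
  omega

lemma cycle_length_gt (H : SimpleGraph V) (k : ℕ) (hk : k ≤ Fintype.card V)
    (hcards : ∀ s : Finset V, s.card = k → (H.induce (↑s : Set V)).IsAcyclic)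
    {v : V} {p : H.Walk v v} (hp : p.IsCycle) : k < p.length := by
  classical
  by_contra hle
  push_neg at hle
  cases hpc : p with
  | nil => rw [hpc] at hp; exact absurd rfl hp.ne_nil
  | @cons _ w _ h q =>
    have hsupp : p.support.toFinset ⊆ q.support.toFinset := by
      intro x hx
      rw [List.mem_toFinset] at hx ⊢
      rw [hpc, Walk.support_cons, List.mem_cons] at hx
      rcases hx with rfl | hx
      · exact q.end_mem_support
      · exact hx
    have hcardsupp : p.support.toFinset.card ≤ k := by
      calc p.support.toFinset.card ≤ q.support.toFinset.card := Finset.card_le_card hsupp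
        _ ≤ q.support.length := List.toFinset_card_le _
        _ = q.length + 1 := q.length_support
        _ = p.length := by rw [hpc]; simp
        _ ≤ k := hle
    obtain ⟨s, hsub, -, hscard⟩ := Finset.exists_subsuperset_card_eq
      (Finset.subset_univ p.support.toFinset) hcardsupp (by simpa [Finset.card_univ] using hk)
    have hmem : ∀ x ∈ p.support, x ∈ (↑s : Set V) := by
      intro x hx
      exact hsub (List.mem_toFinset.mpr hx)
    obtain ⟨q', hq'⟩ := exists_walk_induce p hmem (hmem v p.start_mem_support)
      (hmem v p.start_mem_support)
    have hinj : Function.Injective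
        ⇑(SimpleGraph.Embedding.induce (↑s : Set V) (G := H)).toHom :=
      fun a b hab => Subtype.val_injective hab
    have : q'.IsCycle := by
      rw [← Walk.map_isCycle_iff_of_injective hinj, hq']
      exact hp
    exact hcards s hscard q' this

end Aux

/-- For `n ≥ 2ℓ+2`, if `F` is acyclic, `H` contains a cycle, and they have the same
`(n-ℓ)`-deck, then no card of `F` has radius at most `1`; in particular no card is a
star, so the minimum radius among cards is greater than `1`. -/
theorem no_card_radius_le_one (n ℓ : ℕ) (hℓ : 1 ≤ ℓ) (hn : 2 * ℓ + 2 ≤ n)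
    (F H : SimpleGraph (Fin n)) (hF : F.IsAcyclic) (hH : ¬ H.IsAcyclic)
    (hdeck : SameDeck F H (n - ℓ)) :
    (∀ s : Finset (Fin n), s.card = n - ℓ →
      ¬ gradius (SimpleGraph.induce (↑s : Set (Fin n)) F) ≤ 1) ∧
    (∀ s : Finset (Fin n), s.card = n - ℓ →
      ¬ IsStar (SimpleGraph.induce (↑s : Set (Fin n)) F)) := by
  classical
  set k := n - ℓ with hkdef
  have hk3 : 3 ≤ k := by omega
  have hkn : k ≤ n := by omega
  have main : ∀ s : Finset (Fin n), s.card = n - ℓ →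
      ¬ IsStar (SimpleGraph.induce (↑s : Set (Fin n)) F) := by
    intro s₀ hs₀ hstar
    obtain ⟨φ, hφ⟩ := hdeck
    -- every card of H is acyclic
    have hcards : ∀ t : Finset (Fin n), t.card = k → (H.induce (↑t : Set (Fin n))).IsAcyclic := by
      intro t ht
      obtain ⟨e⟩ := hφ (φ.symm ⟨t, ht⟩)
      have heq : (φ (φ.symm ⟨t, ht⟩)) = ⟨t, ht⟩ := φ.apply_symm_apply _
      rw [heq] at e
      exact isAcyclic_of_iso e (isAcyclic_induce hF _)
    -- H has a star card
    obtain ⟨eiso⟩ := hφ ⟨s₀, hs₀⟩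
    have hstarH : IsStar (H.induce (↑(φ ⟨s₀, hs₀⟩).1 : Set (Fin n))) := isStar_of_iso eiso hstar
    set t₀ : Finset (Fin n) := (φ ⟨s₀, hs₀⟩).1 with ht₀def
    have ht₀ : t₀.card = k := (φ ⟨s₀, hs₀⟩).2
    obtain ⟨c0, hdom, -⟩ := hstarH
    set c : Fin n := (c0 : Fin n) with hcdef
    have hct₀ : c ∈ t₀ := Finset.mem_coe.mp c0.2
    set L : Finset (Fin n) := t₀.erase c with hLdef
    have hLcard : L.card = k - 1 := by
      rw [hLdef, Finset.card_erase_of_mem hct₀, ht₀]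
    have hadjL : ∀ x ∈ L, H.Adj c x := by
      intro x hx
      have hxt : x ∈ t₀ := Finset.mem_of_mem_erase hx
      have hxc : x ≠ c := Finset.ne_of_mem_erase hx
      have hx0 : (⟨x, by simpa using hxt⟩ : (↑t₀ : Set (Fin n))) ≠ c0 := by
        intro habs
        apply hxc
        have := congrArg Subtype.val habs
        simpa [hcdef] using this
      have h2 := hdom ⟨x, by simpa using hxt⟩ hx0
      exact h2
    -- a cycle in H
    simp only [SimpleGraph.IsAcyclic, not_forall, not_not] at hH
    obtain ⟨v, p, hp⟩ := hH
    have hlen : k < p.length := cycle_length_gt H k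
      (by simpa [Fintype.card_fin] using hkn) hcards hp
    have hlow : L.card + (p.length - 2) ≤ ecard H := star_cycle_ecard_lower H hp L hadjL
    -- edge counting : ecard F = ecard H
    have hsums : ∑ s ∈ (Finset.univ : Finset (Fin n)).powersetCard k,
          ecard (F.induce ((s : Finset (Fin n)) : Set (Fin n)))
        = ∑ s ∈ (Finset.univ : Finset (Fin n)).powersetCard k,
          ecard (H.induce ((s : Finset (Fin n)) : Set (Fin n))) := by
      refine Finset.sum_bij
        (fun s hs => (φ ⟨s, by simpa using (Finset.mem_powersetCard.mp hs).2⟩).1) ?_ ?_ ?_ ?_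
      · intro s hs
        rw [Finset.mem_powersetCard]
        exact ⟨Finset.subset_univ _, (φ _).2⟩
      · intro s1 hs1 s2 hs2 heq
        have := φ.injective (Subtype.ext heq)
        exact congrArg Subtype.val this
      · intro t ht
        have htc : t.card = k := (Finset.mem_powersetCard.mp ht).2
        refine ⟨(φ.symm ⟨t, htc⟩).1, ?_, ?_⟩
        · rw [Finset.mem_powersetCard]
          exact ⟨Finset.subset_univ _, (φ.symm _).2⟩
        · simp only [Subtype.coe_eta, Equiv.apply_symm_apply]
      · intro s hs
        obtain ⟨e⟩ := hφ ⟨s, by simpa using (Finset.mem_powersetCard.mp hs).2⟩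
        exact ecard_eq_of_iso e
    rw [sum_ecard_induce F k (by omega), sum_ecard_induce H k (by omega)] at hsums
    have hCpos : 0 < (Fintype.card (Fin n) - 2).choose (k - 2) := by
      apply Nat.choose_pos
      simp [Fintype.card_fin]
      omega
    have hFH : ecard F = ecard H := Nat.eq_of_mul_eq_mul_right hCpos hsums
    have hFlt : ecard F < n := by
      haveI : Nonempty (Fin n) := ⟨⟨0, by omega⟩⟩
      have := ecard_lt_card_of_isAcyclic (V := Fin n) hF
      simpa [Fintype.card_fin] using this
    omega
  refine ⟨?_, main⟩
  intro s hs hrad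
  obtain ⟨c, hdom⟩ := exists_dominating_of_gradius_le_one hrad
  exact main s hs (isStar_of_acyclic_dominating (isAcyclic_induce hF _) c hdom)
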